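/- For every n ≥ 5 and every 1 ≤ s ≤ n−1, the complete bipartite graph K_{s,n−s} has metric dimension n−2, and there exists a single edge e in the complement of K_{s,n−s} such that β(K_{s,n−s} + e) = n−3; in particular K_{s,n−s} is reducible. -/

import Mathlib

open SimpleGraph

/-- `W` is a resolving set for `G`: vertices with equal distance vectors to `W` are equal. -/
def IsResolvingSet {V : Type*} (G : SimpleGraph V) (W : Set V) : Prop :=
  ∀ u v : V, (∀ w ∈ W, G.dist w u = G.dist w v) → u = v

/-- The metric dimension of `G`: the least cardinality of a resolving set. -/
noncomputable def metricDim {V : Type*} [Fintype V] (G : SimpleGraph V) : ℕ :=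
  sInf {n | ∃ W : Finset V, W.card = n ∧ IsResolvingSet G ↑W}

/-- The threshold dimension of `G`: the least metric dimension over spanning supergraphs. -/
noncomputable def thresholdDim {V : Type*} [Fintype V] (G : SimpleGraph V) : ℕ :=
  sInf {n | ∃ H : SimpleGraph V, G ≤ H ∧ metricDim H = n}

/-- The strong product of `k` copies of the path on `{0, …, n-1}`. -/
def strongPow (n k : ℕ) : SimpleGraph (Fin k → Fin n) where
  Adj x y := x ≠ y ∧ ∀ i, ((x i : ℤ) - (y i : ℤ)).natAbs ≤ 1
  symm := ⟨by
    rintro x y ⟨h1, h2⟩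
    refine ⟨fun h => h1 h.symm, fun i => ?_⟩
    rw [show (y i : ℤ) - (x i : ℤ) = -((x i : ℤ) - (y i : ℤ)) by ring, Int.natAbs_neg]
    exact h2 i⟩
  loopless := ⟨fun x ⟨h, _⟩ => h rfl⟩

open Sum Finset

section helpers
variable {V : Type*} {G : SimpleGraph V}

lemma dist_two' {u v w : V} (hne : u ≠ v) (hna : ¬G.Adj u v)
    (h1 : G.Adj u w) (h2 : G.Adj w v) : G.dist u v = 2 := by
  have hle : G.dist u v ≤ 2 := by
    have := G.dist_le (Walk.cons h1 (Walk.cons h2 Walk.nil))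
    simpa using this
  have h0 : G.dist u v ≠ 0 := by
    rw [Ne, SimpleGraph.dist_eq_zero_iff_eq_or_not_reachable]
    push_neg
    exact ⟨hne, ⟨Walk.cons h1 (Walk.cons h2 Walk.nil)⟩⟩
  have h1' : G.dist u v ≠ 1 := fun h => hna (SimpleGraph.dist_eq_one_iff_adj.mp h)
  omega

lemma dist_nz {u v w : V} (hne : u ≠ v) (h1 : G.Adj u w) (h2 : G.Adj w v) :
    G.dist u v ≠ 0 := by
  rw [Ne, SimpleGraph.dist_eq_zero_iff_eq_or_not_reachable]
  push_neg
  exact ⟨hne, ⟨Walk.cons h1 (Walk.cons h2 Walk.nil)⟩⟩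

end helpers

lemma metricDim_eq' {V : Type*} [Fintype V] {G : SimpleGraph V} {m : ℕ}
    (W : Finset V) (hW : W.card = m) (hres : IsResolvingSet G ↑W)
    (hlb : ∀ W' : Finset V, IsResolvingSet G ↑W' → m ≤ W'.card) :
    metricDim G = m := by
  apply le_antisymm
  · exact Nat.sInf_le ⟨W, hW, hres⟩
  · refine le_csInf ⟨m, W, hW, hres⟩ ?_
    rintro k ⟨W', hc, hr⟩
    exact hc ▸ hlb W' hr

lemma lb_of_classes {V : Type*} [Fintype V] [DecidableEq V] {G : SimpleGraph V} {W : Finset V}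
    (hres : IsResolvingSet G ↑W) {k : ℕ} (f : V → Fin k)
    (htwin : ∀ x y : V, f x = f y → x ∉ W → y ∉ W →
       ∀ w ∈ W, G.dist w x = G.dist w y) :
    Fintype.card V - k ≤ W.card := by
  have hinj : Set.InjOn f ↑(Wᶜ) := by
    intro x hx y hy hxy
    exact hres x y (fun w hw => htwin x y hxy (by simpa using hx) (by simpa using hy) w hw)
  have hcard : (Wᶜ).card ≤ k := by
    have := Finset.card_le_card_of_injOn f (fun x _ => Finset.mem_univ (f x)) hinj
    simpa using this
  have := Finset.card_add_card_compl W
  omega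

variable {α β : Type*}

lemma K_adj_lr (a : α) (b : β) : (completeBipartiteGraph α β).Adj (inl a) (inr b) := by simp
lemma K_adj_rl (b : β) (a : α) : (completeBipartiteGraph α β).Adj (inr b) (inl a) := by simp

lemma K_dist_lr (a : α) (b : β) : (completeBipartiteGraph α β).dist (inl a) (inr b) = 1 :=
  SimpleGraph.dist_eq_one_iff_adj.mpr (K_adj_lr a b)
lemma K_dist_rl (b : β) (a : α) : (completeBipartiteGraph α β).dist (inr b) (inl a) = 1 :=
  SimpleGraph.dist_eq_one_iff_adj.mpr (K_adj_rl b a)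

lemma K_dist_ll (b0 : β) {a a' : α} (h : a ≠ a') :
    (completeBipartiteGraph α β).dist (inl a) (inl a') = 2 :=
  dist_two' (by simp [h]) (by simp) (K_adj_lr a b0) (K_adj_rl b0 a')

lemma K_dist_rr (a0 : α) {b b' : β} (h : b ≠ b') :
    (completeBipartiteGraph α β).dist (inr b) (inr b') = 2 :=
  dist_two' (by simp [h]) (by simp) (K_adj_rl b a0) (K_adj_lr a0 b')

lemma dim_K [Fintype α] [Fintype β] [DecidableEq α] [DecidableEq β]
    (a0 : α) (b0 : β) (hcond : 2 ≤ Fintype.card α ∨ 2 ≤ Fintype.card β) :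
    metricDim (completeBipartiteGraph α β) = Fintype.card α + Fintype.card β - 2 := by
  classical
  set W : Finset (α ⊕ β) := ({inl a0, inr b0} : Finset (α ⊕ β))ᶜ with hWdef
  have hmem : ∀ x : α ⊕ β, x ∈ W ↔ x ≠ inl a0 ∧ x ≠ inr b0 := by
    intro x; simp [hWdef, not_or]
  have hcard : W.card = Fintype.card α + Fintype.card β - 2 := by
    rw [hWdef, Finset.card_compl, Finset.card_insert_of_notMem (by simp),
      Finset.card_singleton, Fintype.card_sum]
  have hres : IsResolvingSet (completeBipartiteGraph α β) ↑W := by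
    intro u v h
    have h' : ∀ w, w ∈ W → (completeBipartiteGraph α β).dist w u =
        (completeBipartiteGraph α β).dist w v := fun w hw => h w (Finset.mem_coe.mpr hw)
    match u, v with
    | inl a, inl a' =>
      rcases eq_or_ne a a' with rfl | hne
      · rfl
      exfalso
      have hone : a ≠ a0 ∨ a' ≠ a0 := by
        by_contra hc; push_neg at hc; exact hne (hc.1.trans hc.2.symm)
      rcases hone with ha | ha'
      · have := h' (inl a) ((hmem _).mpr ⟨by simp [ha], by simp⟩)
        rw [K_dist_ll b0 hne, SimpleGraph.dist_self] at this
        simp at this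
      · have := h' (inl a') ((hmem _).mpr ⟨by simp [ha'], by simp⟩)
        rw [K_dist_ll b0 (Ne.symm hne), SimpleGraph.dist_self] at this
        simp at this
    | inr b, inr b' =>
      rcases eq_or_ne b b' with rfl | hne
      · rfl
      exfalso
      have hone : b ≠ b0 ∨ b' ≠ b0 := by
        by_contra hc; push_neg at hc; exact hne (hc.1.trans hc.2.symm)
      rcases hone with hb | hb'
      · have := h' (inr b) ((hmem _).mpr ⟨by simp, by simp [hb]⟩)
        rw [K_dist_rr a0 hne, SimpleGraph.dist_self] at this
        simp at this
      · have := h' (inr b') ((hmem _).mpr ⟨by simp, by simp [hb']⟩)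
        rw [K_dist_rr a0 (Ne.symm hne), SimpleGraph.dist_self] at this
        simp at this
    | inl a, inr b =>
      exfalso
      rcases hcond with hA | hB
      · obtain ⟨a1, ha1⟩ := Fintype.exists_ne_of_one_lt_card hA a0
        have := h' (inl a1) ((hmem _).mpr ⟨by simp [ha1], by simp⟩)
        rw [K_dist_lr] at this
        rcases eq_or_ne a1 a with rfl | hna
        · rw [SimpleGraph.dist_self] at this; simp at this
        · rw [K_dist_ll b0 hna] at this; simp at this
      · obtain ⟨b1, hb1⟩ := Fintype.exists_ne_of_one_lt_card hB b0
        have := h' (inr b1) ((hmem _).mpr ⟨by simp, by simp [hb1]⟩)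
        rw [K_dist_rl] at this
        rcases eq_or_ne b1 b with rfl | hnb
        · rw [SimpleGraph.dist_self] at this; simp at this
        · rw [K_dist_rr a0 hnb] at this; simp at this
    | inr b, inl a =>
      exfalso
      rcases hcond with hA | hB
      · obtain ⟨a1, ha1⟩ := Fintype.exists_ne_of_one_lt_card hA a0
        have := h' (inl a1) ((hmem _).mpr ⟨by simp [ha1], by simp⟩)
        rw [K_dist_lr] at this
        rcases eq_or_ne a1 a with rfl | hna
        · rw [SimpleGraph.dist_self] at this; simp at this
        · rw [K_dist_ll b0 hna] at this; simp at this
      · obtain ⟨b1, hb1⟩ := Fintype.exists_ne_of_one_lt_card hB b0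
        have := h' (inr b1) ((hmem _).mpr ⟨by simp, by simp [hb1]⟩)
        rw [K_dist_rl] at this
        rcases eq_or_ne b1 b with rfl | hnb
        · rw [SimpleGraph.dist_self] at this; simp at this
        · rw [K_dist_rr a0 hnb] at this; simp at this
  refine metricDim_eq' W hcard hres ?_
  intro W' hres'
  have key := lb_of_classes hres' (Sum.elim (fun _ => (0 : Fin 2)) (fun _ => 1)) ?_
  · rw [Fintype.card_sum] at key; exact key
  · intro x y hf hx hy w hw
    have hwx : w ≠ x := fun h => hx (h ▸ hw)
    have hwy : w ≠ y := fun h => hy (h ▸ hw)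
    match x, y with
    | inl a, inl a' =>
      rcases eq_or_ne a a' with rfl | hne
      · rfl
      match w with
      | inl a'' =>
        rw [K_dist_ll b0 (fun h => hwx (by rw [h])), K_dist_ll b0 (fun h => hwy (by rw [h]))]
      | inr b'' => rw [K_dist_rl, K_dist_rl]
    | inl a, inr b => simp at hf
    | inr b, inl a => simp at hf
    | inr b, inr b' =>
      rcases eq_or_ne b b' with rfl | hne
      · rfl
      match w with
      | inl a'' => rw [K_dist_lr, K_dist_lr]
      | inr b'' =>
        rw [K_dist_rr a0 (fun h => hwx (by rw [h])), K_dist_rr a0 (fun h => hwy (by rw [h]))]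


section G1
variable (b0 b1 : β)

local notation "GG" => completeBipartiteGraph α β ⊔ fromEdgeSet {Sym2.mk (inr b0) (inr b1)}

lemma G1_adj_lr (a : α) (b : β) : (GG).Adj (inl a) (inr b) := Or.inl (by simp)
lemma G1_adj_rl (b : β) (a : α) : (GG).Adj (inr b) (inl a) := Or.inl (by simp)

lemma G1_dist_lr (a : α) (b : β) : (GG).dist (inl a) (inr b) = 1 :=
  SimpleGraph.dist_eq_one_iff_adj.mpr (G1_adj_lr b0 b1 a b)
lemma G1_dist_rl (b : β) (a : α) : (GG).dist (inr b) (inl a) = 1 :=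
  SimpleGraph.dist_eq_one_iff_adj.mpr (G1_adj_rl b0 b1 b a)

lemma G1_dist_ll (b : β) {a a' : α} (h : a ≠ a') :
    (GG).dist (inl a) (inl a') = 2 := by
  refine dist_two' (by simp [h]) ?_ (G1_adj_lr b0 b1 a b) (G1_adj_rl b0 b1 b a')
  simp [h, Sym2.eq_iff]

lemma G1_dist_edge (h : b0 ≠ b1) : (GG).dist (inr b0) (inr b1) = 1 := by
  refine SimpleGraph.dist_eq_one_iff_adj.mpr (Or.inr ?_)
  simp [h]

lemma G1_dist_rr (a0 : α) {b b' : β} (h : b ≠ b')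
    (h1 : ¬(b = b0 ∧ b' = b1)) (h2 : ¬(b = b1 ∧ b' = b0)) :
    (GG).dist (inr b) (inr b') = 2 := by
  refine dist_two' (by simp [h]) ?_ (G1_adj_rl b0 b1 b a0) (G1_adj_lr b0 b1 a0 b')
  simp only [SimpleGraph.sup_adj, SimpleGraph.fromEdgeSet_adj, Set.mem_singleton_iff,
    completeBipartiteGraph_adj, Sym2.eq_iff]
  push_neg
  simp_all

lemma G1_dist_rr_nz (a0 : α) {b b' : β} (h : b ≠ b') : (GG).dist (inr b) (inr b') ≠ 0 :=
  dist_nz (by simp [h]) (G1_adj_rl b0 b1 b a0) (G1_adj_lr b0 b1 a0 b')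

lemma dim_plus_right [Fintype α] [Fintype β] [DecidableEq α] [DecidableEq β]
    (a0 : α) (b2 : β) (h01 : b0 ≠ b1) (h02 : b0 ≠ b2) (h12 : b1 ≠ b2)
    (hcond : 2 ≤ Fintype.card α ∨ 4 ≤ Fintype.card β) :
    metricDim (GG) = Fintype.card α + Fintype.card β - 3 := by
  classical
  set W : Finset (α ⊕ β) := ({inl a0, inr b1, inr b2} : Finset (α ⊕ β))ᶜ with hWdef
  have hmem : ∀ x : α ⊕ β, x ∈ W ↔ x ≠ inl a0 ∧ x ≠ inr b1 ∧ x ≠ inr b2 := by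
    intro x; simp [hWdef, not_or]
  have hcard : W.card = Fintype.card α + Fintype.card β - 3 := by
    rw [hWdef, Finset.card_compl, Finset.card_insert_of_notMem (by simp),
      Finset.card_insert_of_notMem (by simp [h12]), Finset.card_singleton, Fintype.card_sum]
  have hres : IsResolvingSet (GG) ↑W := by
    intro u v h
    have h' : ∀ w, w ∈ W → (GG).dist w u = (GG).dist w v :=
      fun w hw => h w (Finset.mem_coe.mpr hw)
    match u, v with
    | inl a, inl a' =>
      rcases eq_or_ne a a' with rfl | hne
      · rfl
      exfalso
      have hone : a ≠ a0 ∨ a' ≠ a0 := by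
        by_contra hc; push_neg at hc; exact hne (hc.1.trans hc.2.symm)
      rcases hone with ha | ha'
      · have := h' (inl a) ((hmem _).mpr ⟨by simp [ha], by simp, by simp⟩)
        rw [G1_dist_ll b0 b1 b0 hne, SimpleGraph.dist_self] at this
        simp at this
      · have := h' (inl a') ((hmem _).mpr ⟨by simp [ha'], by simp, by simp⟩)
        rw [G1_dist_ll b0 b1 b0 (Ne.symm hne), SimpleGraph.dist_self] at this
        simp at this
    | inr b, inr b' =>
      rcases eq_or_ne b b' with rfl | hne
      · rfl
      exfalso
      by_cases hb : b = b1 ∨ b = b2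
      · by_cases hb' : b' = b1 ∨ b' = b2
        · have hw0 : inr b0 ∈ W := (hmem _).mpr ⟨by simp, by simp [h01], by simp [h02]⟩
          have hthis := h' (inr b0) hw0
          rcases hb with hbe | hbe <;> rcases hb' with hbe' | hbe'
          · exact hne (hbe.trans hbe'.symm)
          · rw [hbe, hbe'] at hthis
            rw [G1_dist_edge b0 b1 h01,
              G1_dist_rr b0 b1 a0 h02 (fun hh => h12 hh.2.symm) (fun hh => h01 hh.1)] at hthis
            simp at hthis
          · rw [hbe, hbe'] at hthis
            rw [G1_dist_rr b0 b1 a0 h02 (fun hh => h12 hh.2.symm) (fun hh => h01 hh.1),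
              G1_dist_edge b0 b1 h01] at hthis
            simp at hthis
          · exact hne (hbe.trans hbe'.symm)
        · push_neg at hb'
          have := h' (inr b') ((hmem _).mpr ⟨by simp, by simp [hb'.1], by simp [hb'.2]⟩)
          rw [SimpleGraph.dist_self] at this
          exact G1_dist_rr_nz b0 b1 a0 (Ne.symm hne) this
      · push_neg at hb
        have := h' (inr b) ((hmem _).mpr ⟨by simp, by simp [hb.1], by simp [hb.2]⟩)
        rw [SimpleGraph.dist_self] at this
        exact G1_dist_rr_nz b0 b1 a0 hne this.symm
    | inl a, inr b =>
      exfalso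
      rcases hcond with hA | hB
      · obtain ⟨a1, ha1⟩ := Fintype.exists_ne_of_one_lt_card hA a0
        have := h' (inl a1) ((hmem _).mpr ⟨by simp [ha1], by simp, by simp⟩)
        rw [G1_dist_lr] at this
        rcases eq_or_ne a1 a with rfl | hna
        · rw [SimpleGraph.dist_self] at this; simp at this
        · rw [G1_dist_ll b0 b1 b0 hna] at this; simp at this
      · obtain ⟨b3, hb3⟩ : ∃ b3 : β, b3 ∉ ({b0, b1, b2} : Finset β) := by
          by_contra hc; push_neg at hc
          have hsub : (Finset.univ : Finset β) ⊆ {b0, b1, b2} := fun x _ => hc x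
          have hc1 := Finset.card_le_card hsub
          have hc2 : ({b0, b1, b2} : Finset β).card ≤ 3 :=
            (Finset.card_insert_le _ _).trans (Nat.succ_le_succ
              ((Finset.card_insert_le _ _).trans (by simp)))
          rw [Finset.card_univ] at hc1; omega
        simp only [Finset.mem_insert, Finset.mem_singleton, not_or] at hb3
        have := h' (inr b3) ((hmem _).mpr ⟨by simp, by simp [hb3.2.1], by simp [hb3.2.2]⟩)
        rw [G1_dist_rl] at this
        rcases eq_or_ne b3 b with rfl | hnb
        · rw [SimpleGraph.dist_self] at this; simp at this
        · rw [G1_dist_rr b0 b1 a0 hnb (by simp [hb3.1]) (by simp [hb3.2.1])] at this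
          simp at this
    | inr b, inl a =>
      exfalso
      rcases hcond with hA | hB
      · obtain ⟨a1, ha1⟩ := Fintype.exists_ne_of_one_lt_card hA a0
        have := h' (inl a1) ((hmem _).mpr ⟨by simp [ha1], by simp, by simp⟩)
        rw [G1_dist_lr] at this
        rcases eq_or_ne a1 a with rfl | hna
        · rw [SimpleGraph.dist_self] at this; simp at this
        · rw [G1_dist_ll b0 b1 b0 hna] at this; simp at this
      · obtain ⟨b3, hb3⟩ : ∃ b3 : β, b3 ∉ ({b0, b1, b2} : Finset β) := by
          by_contra hc; push_neg at hc
          have hsub : (Finset.univ : Finset β) ⊆ {b0, b1, b2} := fun x _ => hc x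
          have hc1 := Finset.card_le_card hsub
          have hc2 : ({b0, b1, b2} : Finset β).card ≤ 3 :=
            (Finset.card_insert_le _ _).trans (Nat.succ_le_succ
              ((Finset.card_insert_le _ _).trans (by simp)))
          rw [Finset.card_univ] at hc1; omega
        simp only [Finset.mem_insert, Finset.mem_singleton, not_or] at hb3
        have := h' (inr b3) ((hmem _).mpr ⟨by simp, by simp [hb3.2.1], by simp [hb3.2.2]⟩)
        rw [G1_dist_rl] at this
        rcases eq_or_ne b3 b with rfl | hnb
        · rw [SimpleGraph.dist_self] at this; simp at this
        · rw [G1_dist_rr b0 b1 a0 hnb (by simp [hb3.1]) (by simp [hb3.2.1])] at this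
          simp at this
  refine metricDim_eq' W hcard hres ?_
  intro W' hres'
  have key := lb_of_classes hres'
    (Sum.elim (fun _ => (0 : Fin 3)) (fun b => if b = b0 ∨ b = b1 then 1 else 2)) ?_
  · rw [Fintype.card_sum] at key; exact key
  · intro x y hf hx hy w hw
    have hwx : w ≠ x := fun h => hx (h ▸ hw)
    have hwy : w ≠ y := fun h => hy (h ▸ hw)
    match x, y with
    | inl a, inl a' =>
      rcases eq_or_ne a a' with rfl | hne
      · rfl
      match w with
      | inl a'' =>
        rw [G1_dist_ll b0 b1 b0 (fun h => hwx (by rw [h])),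
          G1_dist_ll b0 b1 b0 (fun h => hwy (by rw [h]))]
      | inr b'' => rw [G1_dist_rl, G1_dist_rl]
    | inl a, inr b =>
      exfalso
      simp only [Sum.elim_inl, Sum.elim_inr] at hf
      split at hf <;> exact absurd hf (by decide)
    | inr b, inl a =>
      exfalso
      simp only [Sum.elim_inl, Sum.elim_inr] at hf
      split at hf <;> exact absurd hf (by decide)
    | inr b, inr b' =>
      rcases eq_or_ne b b' with rfl | hne
      · rfl
      simp only [Sum.elim_inr] at hf
      by_cases hb : b = b0 ∨ b = b1
      · rw [if_pos hb] at hf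
        have hb' : b' = b0 ∨ b' = b1 := by
          by_contra hc
          rw [if_neg hc] at hf
          exact absurd hf (by decide)
        match w with
        | inl a'' => rw [G1_dist_lr, G1_dist_lr]
        | inr b'' =>
          have hb''x : b'' ≠ b := fun h => hwx (by rw [h])
          have hb''y : b'' ≠ b' := fun h => hwy (by rw [h])
          have hb''0 : b'' ≠ b0 := by rcases hb with rfl | rfl <;> rcases hb' with rfl | rfl <;>
            first | exact hb''x | exact hb''y | (exfalso; exact hne rfl)
          have hb''1 : b'' ≠ b1 := by rcases hb with rfl | rfl <;> rcases hb' with rfl | rfl <;>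
            first | exact hb''x | exact hb''y | (exfalso; exact hne rfl)
          rw [G1_dist_rr b0 b1 a0 hb''x (by tauto) (by tauto),
            G1_dist_rr b0 b1 a0 hb''y (by tauto) (by tauto)]
      · rw [if_neg hb] at hf
        have hb' : ¬(b' = b0 ∨ b' = b1) := by
          by_contra hc
          rw [if_pos hc] at hf
          exact absurd hf (by decide)
        push_neg at hb; push_neg at hb'
        match w with
        | inl a'' => rw [G1_dist_lr, G1_dist_lr]
        | inr b'' =>
          have hb''x : b'' ≠ b := fun h => hwx (by rw [h])
          have hb''y : b'' ≠ b' := fun h => hwy (by rw [h])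
          rw [G1_dist_rr b0 b1 a0 hb''x (by tauto) (by tauto),
            G1_dist_rr b0 b1 a0 hb''y (by tauto) (by tauto)]

end G1
section G2
variable (a0 a1 : α)

local notation "GH" => completeBipartiteGraph α β ⊔ fromEdgeSet {Sym2.mk (inl a0) (inl a1)}

lemma G2_adj_lr (a : α) (b : β) : (GH).Adj (inl a) (inr b) := Or.inl (by simp)
lemma G2_adj_rl (b : β) (a : α) : (GH).Adj (inr b) (inl a) := Or.inl (by simp)

lemma G2_dist_lr (a : α) (b : β) : (GH).dist (inl a) (inr b) = 1 :=
  SimpleGraph.dist_eq_one_iff_adj.mpr (G2_adj_lr a0 a1 a b)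
lemma G2_dist_rl (b : β) (a : α) : (GH).dist (inr b) (inl a) = 1 :=
  SimpleGraph.dist_eq_one_iff_adj.mpr (G2_adj_rl a0 a1 b a)

lemma G2_dist_rr (a : α) {b b' : β} (h : b ≠ b') :
    (GH).dist (inr b) (inr b') = 2 := by
  refine dist_two' (by simp [h]) ?_ (G2_adj_rl a0 a1 b a) (G2_adj_lr a0 a1 a b')
  simp [h, Sym2.eq_iff]

lemma G2_dist_edge (h : a0 ≠ a1) : (GH).dist (inl a0) (inl a1) = 1 := by
  refine SimpleGraph.dist_eq_one_iff_adj.mpr (Or.inr ?_)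
  simp [h]

lemma G2_dist_ll (b0 : β) {a a' : α} (h : a ≠ a')
    (h1 : ¬(a = a0 ∧ a' = a1)) (h2 : ¬(a = a1 ∧ a' = a0)) :
    (GH).dist (inl a) (inl a') = 2 := by
  refine dist_two' (by simp [h]) ?_ (G2_adj_lr a0 a1 a b0) (G2_adj_rl a0 a1 b0 a')
  simp only [SimpleGraph.sup_adj, SimpleGraph.fromEdgeSet_adj, Set.mem_singleton_iff,
    completeBipartiteGraph_adj, Sym2.eq_iff]
  push_neg
  simp_all

lemma G2_dist_ll_nz (b0 : β) {a a' : α} (h : a ≠ a') : (GH).dist (inl a) (inl a') ≠ 0 :=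
  dist_nz (by simp [h]) (G2_adj_lr a0 a1 a b0) (G2_adj_rl a0 a1 b0 a')

lemma dim_plus_left [Fintype α] [Fintype β] [DecidableEq α] [DecidableEq β]
    (b0 : β) (a2 : α) (h01 : a0 ≠ a1) (h02 : a0 ≠ a2) (h12 : a1 ≠ a2)
    (hcond : 2 ≤ Fintype.card β ∨ 4 ≤ Fintype.card α) :
    metricDim (GH) = Fintype.card α + Fintype.card β - 3 := by
  classical
  set W : Finset (α ⊕ β) := ({inr b0, inl a1, inl a2} : Finset (α ⊕ β))ᶜ with hWdef
  have hmem : ∀ x : α ⊕ β, x ∈ W ↔ x ≠ inr b0 ∧ x ≠ inl a1 ∧ x ≠ inl a2 := by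
    intro x; simp [hWdef, not_or]
  have hcard : W.card = Fintype.card α + Fintype.card β - 3 := by
    rw [hWdef, Finset.card_compl, Finset.card_insert_of_notMem (by simp),
      Finset.card_insert_of_notMem (by simp [h12]), Finset.card_singleton, Fintype.card_sum]
  have hres : IsResolvingSet (GH) ↑W := by
    intro u v h
    have h' : ∀ w, w ∈ W → (GH).dist w u = (GH).dist w v :=
      fun w hw => h w (Finset.mem_coe.mpr hw)
    match u, v with
    | inr b, inr b' =>
      rcases eq_or_ne b b' with rfl | hne
      · rfl
      exfalso
      have hone : b ≠ b0 ∨ b' ≠ b0 := by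
        by_contra hc; push_neg at hc; exact hne (hc.1.trans hc.2.symm)
      rcases hone with hb | hb'
      · have := h' (inr b) ((hmem _).mpr ⟨by simp [hb], by simp, by simp⟩)
        rw [G2_dist_rr a0 a1 a0 hne, SimpleGraph.dist_self] at this
        simp at this
      · have := h' (inr b') ((hmem _).mpr ⟨by simp [hb'], by simp, by simp⟩)
        rw [G2_dist_rr a0 a1 a0 (Ne.symm hne), SimpleGraph.dist_self] at this
        simp at this
    | inl a, inl a' =>
      rcases eq_or_ne a a' with rfl | hne
      · rfl
      exfalso
      by_cases ha : a = a1 ∨ a = a2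
      · by_cases ha' : a' = a1 ∨ a' = a2
        · have hw0 : inl a0 ∈ W := (hmem _).mpr ⟨by simp, by simp [h01], by simp [h02]⟩
          have hthis := h' (inl a0) hw0
          rcases ha with hae | hae <;> rcases ha' with hae' | hae'
          · exact hne (hae.trans hae'.symm)
          · rw [hae, hae'] at hthis
            rw [G2_dist_edge a0 a1 h01,
              G2_dist_ll a0 a1 b0 h02 (fun hh => h12 hh.2.symm) (fun hh => h01 hh.1)] at hthis
            simp at hthis
          · rw [hae, hae'] at hthis
            rw [G2_dist_ll a0 a1 b0 h02 (fun hh => h12 hh.2.symm) (fun hh => h01 hh.1),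
              G2_dist_edge a0 a1 h01] at hthis
            simp at hthis
          · exact hne (hae.trans hae'.symm)
        · push_neg at ha'
          have := h' (inl a') ((hmem _).mpr ⟨by simp, by simp [ha'.1], by simp [ha'.2]⟩)
          rw [SimpleGraph.dist_self] at this
          exact G2_dist_ll_nz a0 a1 b0 (Ne.symm hne) this
      · push_neg at ha
        have := h' (inl a) ((hmem _).mpr ⟨by simp, by simp [ha.1], by simp [ha.2]⟩)
        rw [SimpleGraph.dist_self] at this
        exact G2_dist_ll_nz a0 a1 b0 hne this.symm
    | inl a, inr b =>
      exfalso
      rcases hcond with hB | hA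
      · obtain ⟨b1, hb1⟩ := Fintype.exists_ne_of_one_lt_card hB b0
        have := h' (inr b1) ((hmem _).mpr ⟨by simp [hb1], by simp, by simp⟩)
        rw [G2_dist_rl] at this
        rcases eq_or_ne b1 b with rfl | hnb
        · rw [SimpleGraph.dist_self] at this; simp at this
        · rw [G2_dist_rr a0 a1 a0 hnb] at this; simp at this
      · obtain ⟨a3, ha3⟩ : ∃ a3 : α, a3 ∉ ({a0, a1, a2} : Finset α) := by
          by_contra hc; push_neg at hc
          have hsub : (Finset.univ : Finset α) ⊆ {a0, a1, a2} := fun x _ => hc x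
          have hc1 := Finset.card_le_card hsub
          have hc2 : ({a0, a1, a2} : Finset α).card ≤ 3 :=
            (Finset.card_insert_le _ _).trans (Nat.succ_le_succ
              ((Finset.card_insert_le _ _).trans (by simp)))
          rw [Finset.card_univ] at hc1; omega
        simp only [Finset.mem_insert, Finset.mem_singleton, not_or] at ha3
        have := h' (inl a3) ((hmem _).mpr ⟨by simp, by simp [ha3.2.1], by simp [ha3.2.2]⟩)
        rw [G2_dist_lr] at this
        rcases eq_or_ne a3 a with rfl | hna
        · rw [SimpleGraph.dist_self] at this; simp at this
        · rw [G2_dist_ll a0 a1 b0 hna (by tauto) (by tauto)] at this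
          simp at this
    | inr b, inl a =>
      exfalso
      rcases hcond with hB | hA
      · obtain ⟨b1, hb1⟩ := Fintype.exists_ne_of_one_lt_card hB b0
        have := h' (inr b1) ((hmem _).mpr ⟨by simp [hb1], by simp, by simp⟩)
        rw [G2_dist_rl] at this
        rcases eq_or_ne b1 b with rfl | hnb
        · rw [SimpleGraph.dist_self] at this; simp at this
        · rw [G2_dist_rr a0 a1 a0 hnb] at this; simp at this
      · obtain ⟨a3, ha3⟩ : ∃ a3 : α, a3 ∉ ({a0, a1, a2} : Finset α) := by
          by_contra hc; push_neg at hc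
          have hsub : (Finset.univ : Finset α) ⊆ {a0, a1, a2} := fun x _ => hc x
          have hc1 := Finset.card_le_card hsub
          have hc2 : ({a0, a1, a2} : Finset α).card ≤ 3 :=
            (Finset.card_insert_le _ _).trans (Nat.succ_le_succ
              ((Finset.card_insert_le _ _).trans (by simp)))
          rw [Finset.card_univ] at hc1; omega
        simp only [Finset.mem_insert, Finset.mem_singleton, not_or] at ha3
        have := h' (inl a3) ((hmem _).mpr ⟨by simp, by simp [ha3.2.1], by simp [ha3.2.2]⟩)
        rw [G2_dist_lr] at this
        rcases eq_or_ne a3 a with rfl | hna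
        · rw [SimpleGraph.dist_self] at this; simp at this
        · rw [G2_dist_ll a0 a1 b0 hna (by tauto) (by tauto)] at this
          simp at this
  refine metricDim_eq' W hcard hres ?_
  intro W' hres'
  have key := lb_of_classes hres'
    (Sum.elim (fun a => if a = a0 ∨ a = a1 then 1 else 2) (fun _ => (0 : Fin 3))) ?_
  · rw [Fintype.card_sum] at key; exact key
  · intro x y hf hx hy w hw
    have hwx : w ≠ x := fun h => hx (h ▸ hw)
    have hwy : w ≠ y := fun h => hy (h ▸ hw)
    match x, y with
    | inr b, inr b' =>
      rcases eq_or_ne b b' with rfl | hne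
      · rfl
      match w with
      | inr b'' =>
        rw [G2_dist_rr a0 a1 a0 (fun h => hwx (by rw [h])),
          G2_dist_rr a0 a1 a0 (fun h => hwy (by rw [h]))]
      | inl a'' => rw [G2_dist_lr, G2_dist_lr]
    | inl a, inr b =>
      exfalso
      simp only [Sum.elim_inl, Sum.elim_inr] at hf
      split at hf <;> exact absurd hf (by decide)
    | inr b, inl a =>
      exfalso
      simp only [Sum.elim_inl, Sum.elim_inr] at hf
      split at hf <;> exact absurd hf (by decide)
    | inl a, inl a' =>
      rcases eq_or_ne a a' with rfl | hne
      · rfl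
      simp only [Sum.elim_inl] at hf
      by_cases ha : a = a0 ∨ a = a1
      · rw [if_pos ha] at hf
        have ha' : a' = a0 ∨ a' = a1 := by
          by_contra hc
          rw [if_neg hc] at hf
          exact absurd hf (by decide)
        match w with
        | inr b'' => rw [G2_dist_rl, G2_dist_rl]
        | inl a'' =>
          have ha''x : a'' ≠ a := fun h => hwx (by rw [h])
          have ha''y : a'' ≠ a' := fun h => hwy (by rw [h])
          have ha''0 : a'' ≠ a0 := by rcases ha with rfl | rfl <;> rcases ha' with rfl | rfl <;>
            first | exact ha''x | exact ha''y | (exfalso; exact hne rfl)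
          have ha''1 : a'' ≠ a1 := by rcases ha with rfl | rfl <;> rcases ha' with rfl | rfl <;>
            first | exact ha''x | exact ha''y | (exfalso; exact hne rfl)
          rw [G2_dist_ll a0 a1 b0 ha''x (by tauto) (by tauto),
            G2_dist_ll a0 a1 b0 ha''y (by tauto) (by tauto)]
      · rw [if_neg ha] at hf
        have ha' : ¬(a' = a0 ∨ a' = a1) := by
          by_contra hc
          rw [if_pos hc] at hf
          exact absurd hf (by decide)
        push_neg at ha; push_neg at ha'
        match w with
        | inr b'' => rw [G2_dist_rl, G2_dist_rl]
        | inl a'' =>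
          have ha''x : a'' ≠ a := fun h => hwx (by rw [h])
          have ha''y : a'' ≠ a' := fun h => hwy (by rw [h])
          rw [G2_dist_ll a0 a1 b0 ha''x (by tauto) (by tauto),
            G2_dist_ll a0 a1 b0 ha''y (by tauto) (by tauto)]

end G2


/-- For `n ≥ 5` and `1 ≤ s ≤ n - 1`, `β(K_{s,n-s}) = n - 2`, a single edge can be added to
lower the dimension to `n - 3`, and `K_{s,n-s}` is reducible. -/
theorem completeBipartite_reducible (n s : ℕ) (hn : 5 ≤ n) (hs1 : 1 ≤ s) (hs2 : s ≤ n - 1) :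
    metricDim (completeBipartiteGraph (Fin s) (Fin (n - s))) = n - 2 ∧
    (∃ u v : Fin s ⊕ Fin (n - s), u ≠ v ∧
      ¬ (completeBipartiteGraph (Fin s) (Fin (n - s))).Adj u v ∧
      metricDim (completeBipartiteGraph (Fin s) (Fin (n - s)) ⊔
        fromEdgeSet {Sym2.mk u v}) = n - 3) ∧
    thresholdDim (completeBipartiteGraph (Fin s) (Fin (n - s))) <
      metricDim (completeBipartiteGraph (Fin s) (Fin (n - s))) := by
  have ht1 : 1 ≤ n - s := by omega
  have hdim : metricDim (completeBipartiteGraph (Fin s) (Fin (n - s))) = n - 2 := by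
    rw [dim_K (⟨0, hs1⟩ : Fin s) (⟨0, ht1⟩ : Fin (n - s))
      (by simp only [Fintype.card_fin]; omega)]
    simp only [Fintype.card_fin]; omega
  have hedge : ∃ u v : Fin s ⊕ Fin (n - s), u ≠ v ∧
      ¬ (completeBipartiteGraph (Fin s) (Fin (n - s))).Adj u v ∧
      metricDim (completeBipartiteGraph (Fin s) (Fin (n - s)) ⊔
        fromEdgeSet {Sym2.mk u v}) = n - 3 := by
    by_cases h3 : 3 ≤ n - s
    · refine ⟨Sum.inr ⟨0, by omega⟩, Sum.inr ⟨1, by omega⟩,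
        by simp [Fin.ext_iff], by simp, ?_⟩
      rw [dim_plus_right (⟨0, by omega⟩ : Fin (n - s)) (⟨1, by omega⟩ : Fin (n - s))
        (⟨0, hs1⟩ : Fin s) (⟨2, by omega⟩ : Fin (n - s))
        (by simp [Fin.ext_iff]) (by simp [Fin.ext_iff]) (by simp [Fin.ext_iff])
        (by simp only [Fintype.card_fin]; omega)]
      simp only [Fintype.card_fin]; omega
    · have hs3 : 3 ≤ s := by omega
      refine ⟨Sum.inl ⟨0, by omega⟩, Sum.inl ⟨1, by omega⟩,
        by simp [Fin.ext_iff], by simp, ?_⟩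
      rw [dim_plus_left (⟨0, by omega⟩ : Fin s) (⟨1, by omega⟩ : Fin s)
        (⟨0, ht1⟩ : Fin (n - s)) (⟨2, by omega⟩ : Fin s)
        (by simp [Fin.ext_iff]) (by simp [Fin.ext_iff]) (by simp [Fin.ext_iff])
        (by simp only [Fintype.card_fin]; omega)]
      simp only [Fintype.card_fin]; omega
  refine ⟨hdim, hedge, ?_⟩
  obtain ⟨u, v, hne, hna, hd⟩ := hedge
  have hle : thresholdDim (completeBipartiteGraph (Fin s) (Fin (n - s))) ≤ n - 3 :=
    Nat.sInf_le ⟨_, le_sup_left, hd⟩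
  rw [hdim]
  omega
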